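/- Let M be a matroid on a finite nonempty ground set L with rank function ρ. Then the maximum, over all distributions D on the independent sets of M, of the minimum satisfaction probability min_{u∈L} D[u] is equal to min{ ρ(X)/|X| : ∅ ≠ X ⊆ L }. In particular this value is the minimum satisfaction probability of any maxmin-fair distribution over the independent sets of M. -/

import Mathlib

open scoped Classical

variable {α : Type*}

/-- `p` is a probability distribution over the feasible solutions `sol`. -/
def IsDistrib [Fintype α] (sol : Finset α → Prop) (p : Finset α → ℝ) : Prop :=
  (∀ A, 0 ≤ p A) ∧ (∀ A, p A ≠ 0 → sol A) ∧ (∑ A : Finset α, p A) = 1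

/-- The satisfaction probability of individual `u` under the distribution `p`. -/
def sat [Fintype α] [DecidableEq α] (p : Finset α → ℝ) (u : α) : ℝ :=
  ∑ A : Finset α, if u ∈ A then p A else 0

/-- `F` is a maxmin-fair distribution over the feasible solutions `sol`. -/
def MaxminFair [Fintype α] [DecidableEq α] (sol : Finset α → Prop) (F : Finset α → ℝ) : Prop :=
  IsDistrib sol F ∧
    ∀ D, IsDistrib sol D → ∀ u, sat F u < sat D u →
      ∃ v, sat D v < sat F v ∧ sat F v ≤ sat F u

/-- The rank of the finite set `X` in the matroid `M`: the size of a largest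
independent subset of `X`. -/
noncomputable def rnk [Fintype α] (M : Matroid α) (X : Finset α) : ℕ :=
  (X.powerset.filter fun A : Finset α => M.Indep (A : Set α)).sup Finset.card

/-- Let `M` be a matroid on a finite nonempty ground set (the whole type `α`, so
`M.E = Set.univ`), with rank function `rnk M`.  The maximum, over all distributions `D`
on the independent sets of `M`, of the minimum satisfaction probability `⨅ u, sat D u`
equals `min { rnk M X / |X| : ∅ ≠ X }`; and this value is the minimum satisfaction
probability of any maxmin-fair distribution over the independent sets of `M`. -/
lemma card_le_rnk [Fintype α] (M : Matroid α) {I X : Finset α} (hI : M.Indep (I : Set α))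
    (hIX : I ⊆ X) : I.card ≤ rnk M X :=
  Finset.le_sup (Finset.mem_filter.2 ⟨Finset.mem_powerset.2 hIX, hI⟩)

lemma exists_extend_basis [Fintype α] (M : Matroid α) (hE : M.E = Set.univ) (S A' : Finset α)
    (hA' : M.Indep (A' : Set α)) (hA'S : A' ⊆ S) :
    ∃ B : Finset α, M.Indep (B : Set α) ∧ A' ⊆ B ∧ B ⊆ S ∧ B.card = rnk M S := by
  have hSE : (S : Set α) ⊆ M.E := by rw [hE]; exact Set.subset_univ _
  obtain ⟨J, hJ, hA'J⟩ := Matroid.Indep.subset_isBasis_of_subset hA' (Finset.coe_subset.2 hA'S) hSE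
  have hJfin : J.Finite := Set.toFinite J
  refine ⟨hJfin.toFinset, ?_, ?_, ?_, ?_⟩
  · rw [hJfin.coe_toFinset]; exact hJ.indep
  · intro a ha; exact hJfin.mem_toFinset.2 (hA'J ha)
  · intro a ha
    exact Finset.mem_coe.1 (hJ.subset (hJfin.mem_toFinset.1 ha))
  · apply le_antisymm
    · apply card_le_rnk M (X := S)
      · rw [hJfin.coe_toFinset]; exact hJ.indep
      · intro a ha; exact Finset.mem_coe.1 (hJ.subset (hJfin.mem_toFinset.1 ha))
    · have hne : (S.powerset.filter fun A : Finset α => M.Indep (A : Set α)).Nonempty :=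
        ⟨∅, Finset.mem_filter.2 ⟨Finset.mem_powerset.2 (Finset.empty_subset S), by
          simpa using M.empty_indep⟩⟩
      obtain ⟨I, hImem, hIcard⟩ := Finset.exists_mem_eq_sup _ hne Finset.card
      rw [rnk, hIcard]
      obtain ⟨hIS, hIi⟩ := Finset.mem_filter.1 hImem
      obtain ⟨J', hJ', hIJ'⟩ := Matroid.Indep.subset_isBasis_of_subset hIi
        (Finset.coe_subset.2 (Finset.mem_powerset.1 hIS)) hSE
      have h1 : (I : Set α).encard ≤ J'.encard := Set.encard_mono hIJ'
      have h2 : J'.encard = J.encard := hJ'.encard_eq_encard hJ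
      have h3 : J.encard = (hJfin.toFinset.card : ℕ∞) := by
        rw [← Set.encard_coe_eq_coe_finsetCard, hJfin.coe_toFinset]
      rw [h2, h3, Set.encard_coe_eq_coe_finsetCard] at h1
      exact_mod_cast h1

lemma greedy [Fintype α] (M : Matroid α) (hE : M.E = Set.univ) (b : ℝ)
    (hb : ∀ X : Finset α, X.Nonempty → b * X.card ≤ (rnk M X : ℝ)) :
    ∀ n (z : α → ℝ), (Finset.univ.filter fun u => z u ≠ 0).card ≤ n → (∀ u, 0 ≤ z u) →
    ∃ A : Finset α, M.Indep (A : Set α) ∧ (∀ a ∈ A, z a ≠ 0) ∧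
      b * ∑ u, z u ≤ ∑ a ∈ A, z a := by
  intro n
  induction n with
  | zero =>
    intro z hcard hz
    have hzz : ∀ u, z u = 0 := by
      intro u
      by_contra h
      have : u ∈ Finset.univ.filter fun u => z u ≠ 0 := Finset.mem_filter.2 ⟨Finset.mem_univ u, h⟩
      have := Finset.card_pos.2 ⟨u, this⟩
      omega
    exact ⟨∅, by simpa using M.empty_indep, by simp, by simp [hzz]⟩
  | succ n ih =>
    intro z hcard hz
    set S := Finset.univ.filter fun u => z u ≠ 0 with hSdef
    rcases S.eq_empty_or_nonempty with hSe | hSne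
    · have hzz : ∀ u, z u = 0 := by
        intro u
        by_contra h
        have : u ∈ S := Finset.mem_filter.2 ⟨Finset.mem_univ u, h⟩
        simp [hSe] at this
      exact ⟨∅, by simpa using M.empty_indep, by simp, by simp [hzz]⟩
    · obtain ⟨u₀, hu₀S, hmin⟩ := S.exists_min_image z hSne
      have hm0 : 0 < z u₀ :=
        lt_of_le_of_ne (hz u₀) (Ne.symm (Finset.mem_filter.1 hu₀S).2)
      set m := z u₀ with hm
      set z' : α → ℝ := fun u => if u ∈ S then z u - m else 0 with hz'def
      have hz' : ∀ u, 0 ≤ z' u := by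
        intro u
        rw [hz'def]
        by_cases h : u ∈ S
        · simp only [h, if_true]
          have := hmin u h
          linarith
        · simp [h]
      have hsupp : (Finset.univ.filter fun u => z' u ≠ 0) ⊆ S.erase u₀ := by
        intro u hu
        have hu' : z' u ≠ 0 := (Finset.mem_filter.1 hu).2
        have huS : u ∈ S := by
          by_contra h
          exact hu' (by simp [hz'def, h])
        refine Finset.mem_erase.2 ⟨?_, huS⟩
        rintro rfl
        exact hu' (by simp [hz'def, huS, hm])
      have hcard' : (Finset.univ.filter fun u => z' u ≠ 0).card ≤ n := by
        have h1 := Finset.card_le_card hsupp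
        have h2 := Finset.card_erase_of_mem hu₀S
        have h3 : S.card ≤ n + 1 := hcard
        omega
      obtain ⟨A', hA'i, hA'supp, hA'sum⟩ := ih z' hcard' hz'
      have hA'S : A' ⊆ S := by
        intro a ha
        have := hA'supp a ha
        by_contra h
        exact this (by simp [hz'def, h])
      obtain ⟨B, hBi, hA'B, hBS, hBcard⟩ := exists_extend_basis M hE S A' hA'i hA'S
      refine ⟨B, hBi, fun a ha => (Finset.mem_filter.1 (hBS ha)).2, ?_⟩
      -- sums
      have h1 : ∑ u, z u = ∑ u, z' u + m * S.card := by
        have e1 : ∑ u, z u = ∑ u ∈ S, z u := (Finset.sum_filter_ne_zero _).symm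
        have e2 : ∑ u, z' u = ∑ u ∈ S, (z u - m) := by
          rw [hz'def]
          rw [Finset.sum_ite_mem, Finset.univ_inter]
        rw [e1, e2, Finset.sum_sub_distrib, Finset.sum_const, nsmul_eq_mul]
        ring
      have h2 : ∑ a ∈ B, z a = ∑ a ∈ B, z' a + m * B.card := by
        have : ∀ a ∈ B, z a = z' a + m := by
          intro a ha
          have haS : a ∈ S := hBS ha
          simp [hz'def, haS]
        rw [Finset.sum_congr rfl this, Finset.sum_add_distrib, Finset.sum_const, nsmul_eq_mul]
        ring
      have h3 : ∑ a ∈ A', z' a ≤ ∑ a ∈ B, z' a :=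
        Finset.sum_le_sum_of_subset_of_nonneg hA'B (fun i _ _ => hz' i)
      have h4 : b * S.card ≤ (rnk M S : ℝ) := hb S hSne
      rw [h1, h2, hBcard]
      nlinarith [hA'sum, h3, hm0, h4]

lemma easy_bound [Fintype α] [DecidableEq α] [Nonempty α] (M : Matroid α) {D : Finset α → ℝ}
    (hD : IsDistrib (fun A : Finset α => M.Indep (A : Set α)) D) {X : Finset α}
    (hX : X.Nonempty) : (⨅ u : α, sat D u) ≤ (rnk M X : ℝ) / X.card := by
  obtain ⟨hD0, hDsol, hDsum⟩ := hD
  have key : ∑ u ∈ X, sat D u ≤ (rnk M X : ℝ) := by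
    have e : ∑ u ∈ X, sat D u = ∑ A : Finset α, ((X ∩ A).card : ℝ) * D A := by
      unfold sat
      rw [Finset.sum_comm]
      refine Finset.sum_congr rfl fun A _ => ?_
      rw [Finset.sum_ite_mem, Finset.sum_const, nsmul_eq_mul]
    rw [e]
    calc ∑ A : Finset α, ((X ∩ A).card : ℝ) * D A
        ≤ ∑ A : Finset α, (rnk M X : ℝ) * D A := by
          refine Finset.sum_le_sum fun A _ => ?_
          rcases eq_or_ne (D A) 0 with h | h
          · simp [h]
          · have hAi : M.Indep (A : Set α) := hDsol A h
            have hsub : M.Indep ((X ∩ A : Finset α) : Set α) := by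
              refine hAi.subset ?_
              rw [Finset.coe_inter]
              exact Set.inter_subset_right
            have hcard := card_le_rnk M hsub Finset.inter_subset_left
            exact mul_le_mul_of_nonneg_right (by exact_mod_cast hcard) (hD0 A)
      _ = (rnk M X : ℝ) := by rw [← Finset.mul_sum, hDsum, mul_one]
  have hbdd : BddBelow (Set.range fun u => sat D u) := Finite.bddBelow_range _
  have hinf : (X.card : ℝ) * (⨅ u : α, sat D u) ≤ ∑ u ∈ X, sat D u := by
    calc (X.card : ℝ) * (⨅ u : α, sat D u) = ∑ _u ∈ X, (⨅ u : α, sat D u) := by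
          rw [Finset.sum_const, nsmul_eq_mul]
      _ ≤ ∑ u ∈ X, sat D u := Finset.sum_le_sum fun u _ => ciInf_le hbdd u
  have hXpos : (0:ℝ) < X.card := by exact_mod_cast Finset.card_pos.2 hX
  rw [le_div_iff₀ hXpos]
  calc (⨅ u : α, sat D u) * X.card = (X.card : ℝ) * (⨅ u : α, sat D u) := by ring
    _ ≤ ∑ u ∈ X, sat D u := hinf
    _ ≤ (rnk M X : ℝ) := key

lemma exists_fair_distrib [Fintype α] [DecidableEq α] (M : Matroid α) (hE : M.E = Set.univ)
    (b : ℝ) (hb0 : 0 ≤ b) (hb : ∀ X : Finset α, X.Nonempty → b * X.card ≤ (rnk M X : ℝ)) :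
    ∃ D, IsDistrib (fun A : Finset α => M.Indep (A : Set α)) D ∧ ∀ u, b ≤ sat D u := by
  classical
  set χ : Finset α → (α → ℝ) := fun A u => if u ∈ A then 1 else 0 with hχ
  set 𝓘 : Finset (Finset α) := Finset.univ.filter (fun A : Finset α => M.Indep (A : Set α))
    with h𝓘
  set s : Finset (α → ℝ) := 𝓘.image χ with hs
  have hχinj : ∀ A ∈ 𝓘, ∀ B ∈ 𝓘, χ A = χ B → A = B := by
    intro A _ B _ h
    ext a
    have h2 := congrFun h a
    by_cases hA : a ∈ A <;> by_cases hB : a ∈ B <;>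
      simp only [hχ, hA, hB, if_true, if_false] at h2 <;> simp_all
  have hmain : ∃ c ∈ convexHull ℝ (s : Set (α → ℝ)), ∀ u, b ≤ c u := by
    by_contra hcon
    push_neg at hcon
    set K : Set (α → ℝ) := {w | ∀ u, b ≤ w u} with hK
    have hdisj : Disjoint (convexHull ℝ (s : Set (α → ℝ))) K := by
      rw [Set.disjoint_left]
      intro c hc hcK
      obtain ⟨u, hu⟩ := hcon c hc
      exact absurd (hcK u) (not_le.2 hu)
    have hKcl : IsClosed K := by
      have : K = ⋂ u, {w : α → ℝ | b ≤ w u} := by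
        ext w; simp [hK, Set.mem_iInter]
      rw [this]
      exact isClosed_iInter fun u => isClosed_le continuous_const (continuous_apply u)
    have hKcv : Convex ℝ K := by
      intro x hx y hy p q hp hq hpq u
      have h1 := hx u
      have h2 := hy u
      simp only [Pi.add_apply, Pi.smul_apply, smul_eq_mul]
      nlinarith
    obtain ⟨f, u', v', hfs, huv, hfK⟩ :=
      _root_.geometric_hahn_banach_compact_closed (convex_convexHull ℝ _)
        (s.finite_toSet.isCompact_convexHull (𝕜 := ℝ)) hKcv hKcl hdisj
    set y : α → ℝ := fun u => f (Pi.single u 1) with hy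
    have hflin : ∀ x : α → ℝ, f x = ∑ u, x u * y u := by
      intro x
      have hx : x = ∑ u, (x u) • (Pi.single u 1 : α → ℝ) := by
        funext v
        rw [Finset.sum_apply]
        simp [Pi.single_apply]
      conv_lhs => rw [hx]
      rw [map_sum]
      exact Finset.sum_congr rfl fun u _ => by rw [map_smul, smul_eq_mul]
    have hbK : (fun _ => b) ∈ K := fun u => le_refl b
    have hynn : ∀ u, 0 ≤ y u := by
      intro u
      by_contra hneg
      push_neg at hneg
      set t : ℝ := (f (fun _ => b) - v' + 1) / (-y u) with ht
      have hfb := hfK _ hbK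
      have htpos : 0 ≤ t := div_nonneg (by linarith) (by linarith)
      have hkK : ((fun _ => b) + t • (Pi.single u 1 : α → ℝ)) ∈ K := by
        intro v
        have h0 : 0 ≤ (Pi.single u 1 : α → ℝ) v := by
          rw [Pi.single_apply]
          by_cases h : v = u <;> simp [h]
        simp only [Pi.add_apply, Pi.smul_apply, smul_eq_mul]
        nlinarith
      have hfk : f ((fun _ => b) + t • (Pi.single u 1 : α → ℝ)) = f (fun _ => b) + t * y u := by
        rw [map_add, map_smul, smul_eq_mul, hy]
      have hty : t * (-y u) = f (fun _ => b) - v' + 1 :=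
        div_mul_cancel₀ _ (by linarith : -y u ≠ 0)
      have hv := hfK _ hkK
      rw [hfk] at hv
      linarith
    have h0s : (0 : α → ℝ) ∈ (s : Set (α → ℝ)) := by
      refine Finset.mem_coe.2 (Finset.mem_image.2 ⟨∅, ?_, ?_⟩)
      · refine Finset.mem_filter.2 ⟨Finset.mem_univ _, ?_⟩
        simpa using M.empty_indep
      · funext u; simp [hχ]
    have h0 : (0:ℝ) < u' := by
      have := hfs 0 (subset_convexHull ℝ _ h0s)
      simpa using this
    have hfb2 : f (fun _ => b) = b * ∑ u, y u := by
      rw [hflin, Finset.mul_sum]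
    have hbS : v' < b * ∑ u, y u := by
      have := hfK _ hbK
      rwa [hfb2] at this
    have hSpos : 0 < ∑ u, y u := by
      rcases le_or_gt (∑ u, y u) 0 with h | h
      · nlinarith [mul_nonneg hb0 (neg_nonneg.2 h)]
      · exact h
    set z : α → ℝ := fun u => y u / ∑ v, y v with hz
    have hznn : ∀ u, 0 ≤ z u := fun u => div_nonneg (hynn u) hSpos.le
    have hzsum : ∑ u, z u = 1 := by
      rw [hz, ← Finset.sum_div]
      exact div_self hSpos.ne'
    obtain ⟨A, hAi, -, hAsum⟩ := greedy M hE b hb Finset.univ.card z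
      (Finset.card_le_card (Finset.subset_univ _)) hznn
    rw [hzsum, mul_one] at hAsum
    have hAs : χ A ∈ (s : Set (α → ℝ)) :=
      Finset.mem_coe.2 (Finset.mem_image.2 ⟨A, Finset.mem_filter.2 ⟨Finset.mem_univ A, hAi⟩, rfl⟩)
    have hfA : f (χ A) = ∑ a ∈ A, y a := by
      rw [hflin]
      simp only [hχ, ite_mul, one_mul, zero_mul]
      rw [Finset.sum_ite_mem, Finset.univ_inter]
    have h5 : ∑ a ∈ A, y a < u' := by
      rw [← hfA]
      exact hfs _ (subset_convexHull ℝ _ hAs)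
    have h6 : ∑ a ∈ A, z a < b := by
      have e : ∑ a ∈ A, z a = (∑ a ∈ A, y a) / ∑ v, y v := by
        rw [hz, Finset.sum_div]
      rw [e, div_lt_iff₀ hSpos]
      linarith
    linarith
  obtain ⟨c, hc, hcK⟩ := hmain
  rw [Finset.convexHull_eq] at hc
  obtain ⟨w, hw0, hwsum, hwc⟩ := hc
  have hcm : c = ∑ p ∈ s, w p • p := by
    rw [← hwc, Finset.centerMass_eq_of_sum_1 _ _ hwsum]
    simp
  refine ⟨fun A => if M.Indep (A : Set α) then w (χ A) else 0, ⟨?_, ?_, ?_⟩, ?_⟩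
  · intro A
    by_cases h : M.Indep (A : Set α)
    · simp only [h, if_true]
      exact hw0 _ (Finset.mem_image.2 ⟨A, Finset.mem_filter.2 ⟨Finset.mem_univ A, h⟩, rfl⟩)
    · simp [h]
  · intro A hA
    by_cases h : M.Indep (A : Set α)
    · exact h
    · simp [h] at hA
  · rw [← hwsum, hs, Finset.sum_image hχinj]
    rw [← Finset.sum_filter]
  · intro u
    have hcu : b ≤ c u := hcK u
    have e1 : c u = ∑ A ∈ 𝓘, w (χ A) * (χ A u) := by
      rw [hcm, Finset.sum_apply]
      rw [hs, Finset.sum_image hχinj]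
      rfl
    have e2 : sat (fun A => if M.Indep (A : Set α) then w (χ A) else 0) u
        = ∑ A ∈ 𝓘, w (χ A) * (χ A u) := by
      unfold sat
      have hpt : ∀ A : Finset α,
          (if u ∈ A then (if M.Indep (A : Set α) then w (χ A) else 0) else 0)
            = (if M.Indep (A : Set α) then w (χ A) * χ A u else 0) := by
        intro A
        by_cases h1 : u ∈ A <;> by_cases h2 : M.Indep (A : Set α) <;> simp [h1, h2, hχ]
      rw [h𝓘, Finset.sum_congr rfl fun A _ => hpt A, ← Finset.sum_filter]
    rw [e2, ← e1]
    exact hcu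

theorem maxmin_value_matroid [Fintype α] [DecidableEq α] [Nonempty α]
    (M : Matroid α) (hE : M.E = Set.univ) :
    IsGreatest
      {x : ℝ | ∃ D, IsDistrib (fun A : Finset α => M.Indep (A : Set α)) D ∧
          x = ⨅ u : α, sat D u}
      (sInf {x : ℝ | ∃ X : Finset α, X.Nonempty ∧ x = (rnk M X : ℝ) / X.card}) ∧
    ∀ F, MaxminFair (fun A : Finset α => M.Indep (A : Set α)) F →
      (⨅ u : α, sat F u) =
        sInf {x : ℝ | ∃ X : Finset α, X.Nonempty ∧ x = (rnk M X : ℝ) / X.card} := by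
  classical
  set T : Set ℝ := {x : ℝ | ∃ X : Finset α, X.Nonempty ∧ x = (rnk M X : ℝ) / X.card} with hT
  have hTfin : T.Finite := by
    have hsub : T ⊆ Set.range (fun X : Finset α => (rnk M X : ℝ) / X.card) := by
      rintro x ⟨X, -, rfl⟩; exact ⟨X, rfl⟩
    exact (Set.finite_range _).subset hsub
  have hTne : T.Nonempty := ⟨_, Finset.univ, Finset.univ_nonempty, rfl⟩
  set β := sInf T with hβ
  have hβmem : β ∈ T := hTne.csInf_mem hTfin
  have hβle : ∀ X : Finset α, X.Nonempty → β ≤ (rnk M X : ℝ) / X.card := fun X hX =>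
    csInf_le hTfin.bddBelow ⟨X, hX, rfl⟩
  have hβ0 : 0 ≤ β := by
    obtain ⟨X, hX, hXe⟩ := hβmem
    rw [hXe]
    positivity
  have hb : ∀ X : Finset α, X.Nonempty → β * X.card ≤ (rnk M X : ℝ) := by
    intro X hX
    have hpos : (0:ℝ) < X.card := by exact_mod_cast Finset.card_pos.2 hX
    have h := hβle X hX
    rw [le_div_iff₀ hpos] at h
    linarith
  obtain ⟨Ds, hDs, hDssat⟩ := exists_fair_distrib M hE β hβ0 hb
  have hupper : ∀ x ∈ {x : ℝ | ∃ D, IsDistrib (fun A : Finset α => M.Indep (A : Set α)) D ∧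
      x = ⨅ u : α, sat D u}, x ≤ β := by
    rintro x ⟨D, hD, rfl⟩
    obtain ⟨X₀, hX₀, hX₀e⟩ := hβmem
    rw [hX₀e]
    exact easy_bound M hD hX₀
  have hDinf : (⨅ u : α, sat Ds u) = β :=
    le_antisymm (hupper _ ⟨Ds, hDs, rfl⟩) (le_ciInf hDssat)
  refine ⟨⟨⟨Ds, hDs, hDinf.symm⟩, fun x hx => hupper x hx⟩, ?_⟩
  intro F hF
  obtain ⟨hFd, hFfair⟩ := hF
  refine le_antisymm (hupper _ ⟨F, hFd, rfl⟩) ?_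
  by_contra hlt
  push_neg at hlt
  obtain ⟨u₀, -, hmin⟩ := Finset.univ.exists_min_image (sat F) Finset.univ_nonempty
  have hinfeq : (⨅ u : α, sat F u) = sat F u₀ :=
    le_antisymm (ciInf_le (Finite.bddBelow_range _) u₀)
      (le_ciInf fun u => hmin u (Finset.mem_univ u))
  rw [hinfeq] at hlt
  have h1 : sat F u₀ < sat Ds u₀ := lt_of_lt_of_le hlt (hDssat u₀)
  obtain ⟨v, hv1, hv2⟩ := hFfair Ds hDs u₀ h1
  have h2 : β ≤ sat Ds v := hDssat v
  have h3 : sat F u₀ ≤ sat F v := hmin v (Finset.mem_univ v)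
  linarith
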